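/- Define δ(B) := det(𝔖(B)) mod 4 for a skew-symmetric n×n integer matrix B, where 𝔖(B) = V(B) + V(B)ᵀ. Then for any n×n permutation matrix P, δ(P·B·Pᵀ) = δ(B). -/

import Mathlib

open Matrix Finset

def upperV {n : ℕ} (B : Matrix (Fin n) (Fin n) ℤ) : Matrix (Fin n) (Fin n) ℤ :=
  Matrix.of fun i j => if i < j then B i j else if i = j then 1 else 0

def symS {n : ℕ} (B : Matrix (Fin n) (Fin n) ℤ) : Matrix (Fin n) (Fin n) ℤ :=
  upperV B + (upperV B)ᵀ

lemma symS_apply {n : ℕ} (B : Matrix (Fin n) (Fin n) ℤ) (i j : Fin n) :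
    symS B i j = if i < j then B i j else if i = j then 2 else B j i := by
  simp only [symS, upperV, Matrix.add_apply, Matrix.transpose_apply, Matrix.of_apply]
  rcases lt_trichotomy i j with h | h | h
  · simp [h, asymm h, h.ne, h.ne']
  · subst h; norm_num
  · simp [h, asymm h, h.ne, h.ne']

section conj
variable {n : ℕ} (σ : Equiv.Perm (Fin n))

lemma conj_apply (M : Matrix (Fin n) (Fin n) ℤ) (i j : Fin n) :
    ((Matrix.of fun i j => if σ i = j then (1:ℤ) else 0) * M *
      (Matrix.of fun i j => if σ i = j then (1:ℤ) else 0)ᵀ) i j = M (σ i) (σ j) := by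
  simp [Matrix.mul_apply, Matrix.transpose_apply, ite_mul, mul_ite,
    Finset.sum_ite_eq, Finset.sum_ite_eq']

lemma perm_mul_transpose :
    (Matrix.of fun i j => if σ i = j then (1:ℤ) else 0) *
      (Matrix.of fun i j => if σ i = j then (1:ℤ) else 0)ᵀ = 1 := by
  ext i j
  simp [Matrix.mul_apply, Matrix.transpose_apply, ite_mul, mul_ite,
    Finset.sum_ite_eq, Finset.sum_ite_eq', Matrix.one_apply, σ.injective.eq_iff]

lemma det_conj (M : Matrix (Fin n) (Fin n) ℤ) :
    ((Matrix.of fun i j => if σ i = j then (1:ℤ) else 0) * M *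
      (Matrix.of fun i j => if σ i = j then (1:ℤ) else 0)ᵀ).det = M.det := by
  rw [Matrix.det_mul, Matrix.det_mul]
  have h1 : ((Matrix.of fun i j => if σ i = j then (1:ℤ) else 0) : Matrix (Fin n) (Fin n) ℤ).det *
      ((Matrix.of fun i j => if σ i = j then (1:ℤ) else 0)ᵀ : Matrix (Fin n) (Fin n) ℤ).det = 1 := by
    rw [← Matrix.det_mul, perm_mul_transpose]
    exact Matrix.det_one
  calc ((Matrix.of fun i j => if σ i = j then (1:ℤ) else 0) : Matrix (Fin n) (Fin n) ℤ).det * M.det *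
      ((Matrix.of fun i j => if σ i = j then (1:ℤ) else 0)ᵀ : Matrix (Fin n) (Fin n) ℤ).det
      = M.det * (((Matrix.of fun i j => if σ i = j then (1:ℤ) else 0) : Matrix (Fin n) (Fin n) ℤ).det *
        ((Matrix.of fun i j => if σ i = j then (1:ℤ) else 0)ᵀ : Matrix (Fin n) (Fin n) ℤ).det) := by ring
  _ = M.det := by rw [h1, mul_one]
end conj

lemma symS_symm {n : ℕ} (B : Matrix (Fin n) (Fin n) ℤ) (i j : Fin n) :
    symS B i j = symS B j i := by
  simp only [symS, Matrix.add_apply, Matrix.transpose_apply]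
  ring

lemma key {n : ℕ} (S T : Matrix (Fin n) (Fin n) (ZMod 4))
    (hS : ∀ i j, S i j = S j i)
    (ε : Fin n → Fin n → ZMod 4) (hε : ∀ i j, ε i j = ε j i) (hd : ∀ i, ε i i = 1)
    (hu : ∀ i j, ε i j = 1 ∨ ε i j = -1)
    (hT : ∀ i j, T i j = ε i j * S i j) :
    T.det = S.det := by
  have hTsym : ∀ i j, T i j = T j i := fun i j => by rw [hT, hT, hε, hS]
  have hprod : ∀ τ : Equiv.Perm (Fin n),
      (∏ i, T (τ i) i) = (∏ i, ε (τ i) i) * ∏ i, S (τ i) i := by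
    intro τ
    rw [← Finset.prod_mul_distrib]
    exact Finset.prod_congr rfl fun i _ => hT _ _
  have hεprod : ∀ τ : Equiv.Perm (Fin n),
      (∏ i, ε (τ i) i) = 1 ∨ (∏ i, ε (τ i) i) = -1 := by
    intro τ
    refine Finset.prod_induction _ (fun x => x = 1 ∨ x = -1) ?_ (Or.inl rfl)
      (fun i _ => hu _ _)
    rintro a b (rfl | rfl) (rfl | rfl) <;> first | (left; decide) | (right; decide)
  have hinvT : ∀ τ : Equiv.Perm (Fin n), (∏ i, T (τ⁻¹ i) i) = ∏ i, T (τ i) i := by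
    intro τ
    calc (∏ i, T (τ⁻¹ i) i) = ∏ i, T i (τ⁻¹ i) := Finset.prod_congr rfl fun i _ => hTsym _ _
    _ = ∏ i, T (τ i) (τ⁻¹ (τ i)) := (Equiv.prod_comp τ (fun i => T i (τ⁻¹ i))).symm
    _ = ∏ i, T (τ i) i := by simp
  have hinvS : ∀ τ : Equiv.Perm (Fin n), (∏ i, S (τ⁻¹ i) i) = ∏ i, S (τ i) i := by
    intro τ
    calc (∏ i, S (τ⁻¹ i) i) = ∏ i, S i (τ⁻¹ i) := Finset.prod_congr rfl fun i _ => hS _ _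
    _ = ∏ i, S (τ i) (τ⁻¹ (τ i)) := (Equiv.prod_comp τ (fun i => S i (τ⁻¹ i))).symm
    _ = ∏ i, S (τ i) i := by simp
  have hεinv : ∀ τ : Equiv.Perm (Fin n), τ⁻¹ = τ → (∏ i, ε (τ i) i) = 1 := by
    intro τ hτ
    refine Finset.prod_ninvolution τ ?_ ?_ (fun i => Finset.mem_univ _) (fun i => ?_)
    · intro i
      have h2 : τ (τ i) = i := by nth_rewrite 1 [← hτ]; exact Equiv.symm_apply_apply τ i
      rw [h2, hε i (τ i)]
      rcases hu (τ i) i with h | h <;> rw [h] <;> decide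
    · intro i hi hcon
      exact hi (by rw [hcon, hd])
    · nth_rewrite 1 [← hτ]
      exact Equiv.symm_apply_apply τ i
  have hdiff2 : ∀ τ : Equiv.Perm (Fin n),
      (2 : ZMod 4) * ((∏ i, T (τ i) i) - ∏ i, S (τ i) i) = 0 := by
    intro τ
    rw [hprod]
    rcases hεprod τ with h | h
    · rw [h]; ring
    · rw [h]
      have h4 : (2 : ZMod 4) * (-2) = 0 := by decide
      calc (2:ZMod 4) * ((-1) * (∏ i, S (τ i) i) - ∏ i, S (τ i) i)
          = (2 * (-2)) * ∏ i, S (τ i) i := by ring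
      _ = 0 := by rw [h4, zero_mul]
  have key0 : ∑ τ : Equiv.Perm (Fin n),
      (((Equiv.Perm.sign τ : ℤ) : ZMod 4) * (∏ i, T (τ i) i)
        - ((Equiv.Perm.sign τ : ℤ) : ZMod 4) * ∏ i, S (τ i) i) = 0 := by
    refine Finset.sum_ninvolution (fun τ => τ⁻¹) ?_ ?_ (fun τ => Finset.mem_univ _)
      (fun τ => inv_inv τ)
    · intro τ
      have hs : ((Equiv.Perm.sign τ⁻¹ : ℤ) : ZMod 4) = ((Equiv.Perm.sign τ : ℤ) : ZMod 4) := by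
        simp
      rw [hinvT, hinvS, hs]
      have := hdiff2 τ
      set c := ((Equiv.Perm.sign τ : ℤ) : ZMod 4)
      calc (c * (∏ i, T (τ i) i) - c * ∏ i, S (τ i) i)
            + (c * (∏ i, T (τ i) i) - c * ∏ i, S (τ i) i)
          = c * (2 * ((∏ i, T (τ i) i) - ∏ i, S (τ i) i)) := by ring
      _ = 0 := by rw [this, mul_zero]
    · intro τ hτ hcon
      apply hτ
      have h1 : (∏ i, ε (τ i) i) = 1 := hεinv τ hcon
      rw [hprod, h1, one_mul]
      ring
  -- conclude
  have hdetT : T.det = ∑ τ : Equiv.Perm (Fin n),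
      ((Equiv.Perm.sign τ : ℤ) : ZMod 4) * ∏ i, T (τ i) i := by
    rw [Matrix.det_apply]
    refine Finset.sum_congr rfl fun τ _ => ?_
    rw [Units.smul_def, zsmul_eq_mul]
  have hdetS : S.det = ∑ τ : Equiv.Perm (Fin n),
      ((Equiv.Perm.sign τ : ℤ) : ZMod 4) * ∏ i, S (τ i) i := by
    rw [Matrix.det_apply]
    refine Finset.sum_congr rfl fun τ _ => ?_
    rw [Units.smul_def, zsmul_eq_mul]
  rw [hdetT, hdetS, ← sub_eq_zero, ← Finset.sum_sub_distrib]
  exact key0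

/-- The binary invariant `δ(B) = det 𝔖(B) mod 4`. -/
def deltaInv {n : ℕ} (B : Matrix (Fin n) (Fin n) ℤ) : ℤ := (symS B).det % 4

theorem stmt_14 {n : ℕ} (B : Matrix (Fin n) (Fin n) ℤ) (hB : Bᵀ = -B)
    (σ : Equiv.Perm (Fin n)) :
    letI P : Matrix (Fin n) (Fin n) ℤ := Matrix.of fun i j => if σ i = j then 1 else 0
    deltaInv (P * B * Pᵀ) = deltaInv B := by
  set P : Matrix (Fin n) (Fin n) ℤ := Matrix.of fun i j => if σ i = j then 1 else 0 with hP
  show deltaInv (P * B * Pᵀ) = deltaInv B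
  have hskew : ∀ a b, B b a = -B a b := by
    intro a b
    have := congrFun (congrFun hB a) b
    simpa using this
  set B' : Matrix (Fin n) (Fin n) ℤ := P * B * Pᵀ with hB'def
  have hB' : ∀ i j, B' i j = B (σ i) (σ j) := fun i j => conj_apply σ B i j
  set S : Matrix (Fin n) (Fin n) ℤ := P * symS B * Pᵀ with hSdef
  have hSapp : ∀ i j, S i j = symS B (σ i) (σ j) := fun i j => conj_apply σ (symS B) i j
  have hdetS : S.det = (symS B).det := det_conj σ (symS B)
  -- the integer-level entry comparison
  have hTZ : ∀ i j, symS B' i j =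
      (if (i < j ∧ σ j < σ i) ∨ (j < i ∧ σ i < σ j) then (-1:ℤ) else 1) * S i j := by
    intro i j
    rw [hSapp, symS_apply, symS_apply, hB' i j, hB' j i]
    rcases lt_trichotomy i j with hij | hij | hij
    · have hne : σ i ≠ σ j := fun h => hij.ne (σ.injective h)
      rcases lt_or_gt_of_ne hne with hs | hs
      · rw [if_pos hij, if_pos hs,
          if_neg (by rintro (⟨_, h⟩ | ⟨h, _⟩); exacts [absurd hs (asymm h), absurd hij (asymm h)])]
        ring
      · rw [if_pos hij, if_neg (asymm hs), if_neg hne,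
          if_pos (Or.inl ⟨hij, hs⟩), hskew (σ i) (σ j)]
        ring
    · subst hij
      simp
    · have hne : σ i ≠ σ j := fun h => hij.ne' (σ.injective h)
      rcases lt_or_gt_of_ne hne with hs | hs
      · rw [if_neg (asymm hij), if_neg hij.ne', if_pos hs,
          if_pos (Or.inr ⟨hij, hs⟩), hskew (σ j) (σ i)]
        ring
      · rw [if_neg (asymm hij), if_neg hij.ne', if_neg (asymm hs), if_neg hne,
          if_neg (by rintro (⟨h, _⟩ | ⟨_, h⟩); exacts [absurd hij (asymm h), absurd hs (asymm h)])]
        ring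
  -- pass to ZMod 4
  rw [deltaInv, deltaInv, ← hdetS]
  have hcast : ∀ M : Matrix (Fin n) (Fin n) ℤ,
      ((M.det : ℤ) : ZMod 4) = ((M.map (Int.castRingHom (ZMod 4))).det) := by
    intro M
    simpa using RingHom.map_det (Int.castRingHom (ZMod 4)) M
  have hz : (((symS B').det : ℤ) : ZMod 4) = ((S.det : ℤ) : ZMod 4) := by
    rw [hcast, hcast]
    refine key _ _ ?_ (fun i j => if (i < j ∧ σ j < σ i) ∨ (j < i ∧ σ i < σ j)
      then (-1 : ZMod 4) else 1) ?_ ?_ ?_ ?_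
    · intro i j
      simp only [Matrix.map_apply]
      rw [hSapp, hSapp, symS_symm]
    · intro i j
      have : ((i < j ∧ σ j < σ i) ∨ (j < i ∧ σ i < σ j)) ↔
          ((j < i ∧ σ i < σ j) ∨ (i < j ∧ σ j < σ i)) := or_comm
      rw [if_congr this rfl rfl]
    · intro i
      simp
    · intro i j
      by_cases h : (i < j ∧ σ j < σ i) ∨ (j < i ∧ σ i < σ j)
      · rw [if_pos h]; right; rfl
      · rw [if_neg h]; left; rfl
    · intro i j
      simp only [Matrix.map_apply]
      rw [hTZ i j, _root_.map_mul, apply_ite (Int.castRingHom (ZMod 4))]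
      simp
  have := (ZMod.intCast_eq_intCast_iff' _ _ _).mp hz
  simpa using this
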